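/- Every MVR chain graph has the same independence model as a DAG under marginalization: for every MVR chain graph G on a finite vertex set V there exist a finite set L disjoint from V and a directed acyclic graph D on vertex set V ∪ L such that for all pairwise disjoint subsets X, Y, Z of V with X and Y nonempty, X and Y are m-separated given Z in G if and only if X and Y are d-separated given Z in D. -/

import Mathlib

open scoped Classical

universe u

variable {V : Type u}

/-- A mixed graph: a set of directed edges and a set of bidirected edges on `V`. -/
structure MixedGraph (V : Type u) where
  /-- `dir u v` means there is a directed edge `u → v`. -/
  dir : V → V → Prop
  /-- `bi u v` means there is a bidirected edge `u ↔ v`. -/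
  bi : V → V → Prop

namespace MixedGraph

/-- The basic well-formedness conditions of a mixed graph with only directed and
bidirected edges: `bi` is symmetric and irreflexive, `dir` is irreflexive, there are no
self-loops and at most one edge between each pair of distinct vertices. -/
def IsMixed (G : MixedGraph V) : Prop :=
  (∀ u v, G.bi u v → G.bi v u) ∧
  (∀ v, ¬ G.bi v v) ∧
  (∀ v, ¬ G.dir v v) ∧
  (∀ u v, G.dir u v → ¬ G.bi u v) ∧
  (∀ u v, G.dir u v → ¬ G.dir v u)

/-- A partially directed cycle: vertices `f 0, f 1, …, f n = f 0` (`n ≥ 2`,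
`f 0, …, f (n-1)` distinct) such that every step is a directed edge `f i → f (i+1)` or a
bidirected edge, and at least one step is directed. -/
def HasPDCycle (G : MixedGraph V) : Prop :=
  ∃ (n : ℕ) (f : ℕ → V), 2 ≤ n ∧ f n = f 0 ∧
    (∀ i j, i < n → j < n → f i = f j → i = j) ∧
    (∀ i, i < n → G.dir (f i) (f (i + 1)) ∨ G.bi (f i) (f (i + 1))) ∧
    (∃ i, i < n ∧ G.dir (f i) (f (i + 1)))

/-- An MVR chain graph: a mixed graph containing only directed and bidirected edges and
having no partially directed cycle. -/
def IsMVR (G : MixedGraph V) : Prop := G.IsMixed ∧ ¬ G.HasPDCycle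

/-- `G.anc u v` : `u` is an ancestor of `v` (`u = v` or there is a directed path
`u → ⋯ → v`). -/
def anc (G : MixedGraph V) (u v : V) : Prop := Relation.ReflTransGen G.dir u v

/-- `an(S)`: the set of ancestors of members of `S`. -/
def ancSet (G : MixedGraph V) (S : Set V) : Set V := {u | ∃ s ∈ S, G.anc u s}

/-- The descendants of `v`. -/
def de (G : MixedGraph V) (v : V) : Set V := {u | G.anc v u}

/-- The non-descendants of `v` : `V \ (de(v) ∪ {v})`. -/
def nd (G : MixedGraph V) (v : V) : Set V := {u | ¬ G.anc v u}

/-- Adjacency: some edge joins `u` and `v`. -/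
def adj (G : MixedGraph V) (u v : V) : Prop := G.dir u v ∨ G.dir v u ∨ G.bi u v

/-- `f 0, …, f n` is a walk: consecutive vertices are joined by some edge. -/
def IsWalk (G : MixedGraph V) (n : ℕ) (f : ℕ → V) : Prop :=
  ∀ i, i < n → G.adj (f i) (f (i + 1))

/-- `f 0, …, f n` is a path: a walk with distinct vertices. -/
def IsPath (G : MixedGraph V) (n : ℕ) (f : ℕ → V) : Prop :=
  G.IsWalk n f ∧ ∀ i j, i ≤ n → j ≤ n → f i = f j → i = j

/-- The nonendpoint vertex `f i` (`0 < i < n`) of a path is a collider: both incident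
edges of the path have an arrowhead at `f i`, i.e. the edge from `f (i-1)` is
`f (i-1) → f i` or `f (i-1) ↔ f i`, and the edge to `f (i+1)` is `f i ← f (i+1)` or
`f i ↔ f (i+1)`. -/
def IsColliderAt (G : MixedGraph V) (f : ℕ → V) (i : ℕ) : Prop :=
  (G.dir (f (i - 1)) (f i) ∨ G.bi (f (i - 1)) (f i)) ∧
  (G.dir (f (i + 1)) (f i) ∨ G.bi (f i) (f (i + 1)))

/-- A path between `α` and `β` is m-connecting given `Z` if every noncollider on it is
not in `Z` and every collider on it is in `an(Z)`. -/
def MConnecting (G : MixedGraph V) (Z : Set V) (α β : V) : Prop :=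
  ∃ (n : ℕ) (f : ℕ → V), G.IsPath n f ∧ f 0 = α ∧ f n = β ∧
    ∀ i, 0 < i → i < n →
      (G.IsColliderAt f i → f i ∈ G.ancSet Z) ∧ (¬ G.IsColliderAt f i → f i ∉ Z)

/-- `X` and `Y` are m-separated given `Z`: no m-connecting path given `Z` joins a vertex
of `X` to a vertex of `Y`. -/
def MSep (G : MixedGraph V) (X Y Z : Set V) : Prop :=
  ∀ α ∈ X, ∀ β ∈ Y, ¬ G.MConnecting Z α β

/-- The induced subgraph of `G` on the vertex set `A` (kept on the same vertex type:
only edges with both endpoints in `A` remain). -/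
def induce (G : MixedGraph V) (A : Set V) : MixedGraph V where
  dir u v := u ∈ A ∧ v ∈ A ∧ G.dir u v
  bi u v := u ∈ A ∧ v ∈ A ∧ G.bi u v

/-- Two vertices are collider connected if joined by a path on which every nonendpoint
vertex is a collider (a single edge counts). -/
def ColliderConnected (G : MixedGraph V) (x y : V) : Prop :=
  ∃ (n : ℕ) (f : ℕ → V), 1 ≤ n ∧ G.IsPath n f ∧ f 0 = x ∧ f n = y ∧
    ∀ i, 0 < i → i < n → G.IsColliderAt f i

end MixedGraph

/-- `Z` separates `X` from `Y` in the undirected graph with adjacency `E` : every path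
from `X` to `Y` meets `Z`. -/
def UndirSep {V : Type u} (E : V → V → Prop) (X Y Z : Set V) : Prop :=
  ∀ (n : ℕ) (f : ℕ → V), (∀ i, i < n → E (f i) (f (i + 1))) →
    (∀ i j, i ≤ n → j ≤ n → f i = f j → i = j) →
    f 0 ∈ X → f n ∈ Y → ∃ i, i ≤ n ∧ f i ∈ Z

namespace MixedGraph

/-- Augmented-graph separation (m*-separation): `Z` separates `X` from `Y` in the
augmented graph (whose edges join the collider-connected pairs) of the induced subgraph
of `G` on `an(X ∪ Y ∪ Z)`. -/
def AugSep (G : MixedGraph V) (X Y Z : Set V) : Prop :=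
  UndirSep (fun a b => (G.induce (G.ancSet (X ∪ Y ∪ Z))).ColliderConnected a b) X Y Z

/-- Connectivity in the bidirected part of `G`. -/
def biConn (G : MixedGraph V) (u v : V) : Prop := Relation.ReflTransGen G.bi u v

/-- The chain component of `v`: the connected component of `v` in the bidirected part. -/
def chainComp (G : MixedGraph V) (v : V) : Set V := {u | G.biConn v u}

/-- `T` is a chain component of `G`. -/
def IsChainComp (G : MixedGraph V) (T : Set V) : Prop := ∃ v, T = G.chainComp v

/-- The parents of a vertex: `pa_G(v) = {w : w → v}`. -/
def pa (G : MixedGraph V) (v : V) : Set V := {w | G.dir w v}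

/-- The boundary of a vertex: parents and bidirected neighbours. -/
def bd (G : MixedGraph V) (v : V) : Set V := {w | G.dir w v ∨ G.bi w v}

/-- The parents of a set: `pa_G(A) = {w ∉ A : w → v for some v ∈ A}`. -/
def paSet (G : MixedGraph V) (A : Set V) : Set V := {w | w ∉ A ∧ ∃ v ∈ A, G.dir w v}

/-- `Nb_G(A)`: `A` together with all vertices joined to `A` by a bidirected edge. -/
def Nb (G : MixedGraph V) (A : Set V) : Set V := A ∪ {w | ∃ v ∈ A, G.bi w v}

/-- The edge relation of the directed graph `D` of chain components:
`C₁ → C₂` iff they are distinct chain components and some directed edge of `G` joins a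
vertex of `C₁` to a vertex of `C₂`. -/
def compRel (G : MixedGraph V) (C₁ C₂ : Set V) : Prop :=
  G.IsChainComp C₁ ∧ G.IsChainComp C₂ ∧ C₁ ≠ C₂ ∧ ∃ u ∈ C₁, ∃ v ∈ C₂, G.dir u v

/-- `pa_D(T)`: the union of the chain components that are parents of `T` in the directed
graph `D` of chain components. -/
def paD (G : MixedGraph V) (T : Set V) : Set V := {w | G.compRel (G.chainComp w) T}

/-- `nd_D(T)`: the union of the chain components `T'` such that there is no directed path
from `T` to `T'` in the directed graph `D` of chain components. -/
def ndD (G : MixedGraph V) (T : Set V) : Set V :=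
  {w | ¬ Relation.ReflTransGen G.compRel T (G.chainComp w)}

/-- Connectivity in the bidirected part of the induced subgraph on `A`. -/
def biConnIn (G : MixedGraph V) (A : Set V) (u v : V) : Prop :=
  Relation.ReflTransGen (fun a b => a ∈ A ∧ b ∈ A ∧ G.bi a b) u v

/-- `A` is connected: the bidirected part of the induced subgraph on `A` is connected
(and `A` is nonempty). -/
def ConnectedIn (G : MixedGraph V) (A : Set V) : Prop :=
  A.Nonempty ∧ ∀ u ∈ A, ∀ v ∈ A, G.biConnIn A u v

/-- `dis_{G_A}(x)`: the connected component (district) of `x` in the bidirected part of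
the induced subgraph `G_A`. -/
def disIn (G : MixedGraph V) (A : Set V) (x : V) : Set V := {y | G.biConnIn A x y}

/-- The Markov blanket `mb(x, A) = pa_G(dis_{G_A}(x)) ∪ (dis_{G_A}(x) \ {x})`. -/
def mb (G : MixedGraph V) (x : V) (A : Set V) : Set V :=
  G.paSet (G.disIn A x) ∪ (G.disIn A x \ {x})

/-- `pre(T)` relative to an order `r` on chain components: the union of all chain
components strictly preceding `T`. -/
def pre (G : MixedGraph V) (r : Set V → Set V → Prop) (T : Set V) : Set V :=
  {v | r (G.chainComp v) T}

/-- `r` is a strict total order on the chain components of `G` that is consistent with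
the directed graph `D` of chain components, i.e. `pa_D(T) ⊆ pre(T)` for all `T`. -/
def ConsistentCompOrder (G : MixedGraph V) (r : Set V → Set V → Prop) : Prop :=
  (∀ C, ¬ r C C) ∧
  (∀ C₁ C₂ C₃, r C₁ C₂ → r C₂ C₃ → r C₁ C₃) ∧
  (∀ C₁ C₂, G.IsChainComp C₁ → G.IsChainComp C₂ → C₁ = C₂ ∨ r C₁ C₂ ∨ r C₂ C₁) ∧
  (∀ T, G.IsChainComp T → G.paD T ⊆ G.pre r T)

/-- A total order `r` on the vertices of `G` is consistent with `G` if `r x y` implies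
that `y` is not an ancestor of `x`. -/
def ConsistentVertexOrder (G : MixedGraph V) (r : V → V → Prop) : Prop :=
  IsStrictTotalOrder V r ∧ ∀ x y, r x y → ¬ G.anc y x

end MixedGraph

section IndepModel

variable {V : Type u} (I : Set V → Set V → Set V → Prop)

/-- Symmetry: `X ⫫ Y | Z  ⇒  Y ⫫ X | Z`. -/
def IndepSymm : Prop := ∀ X Y Z : Set V, I X Y Z → I Y X Z

/-- Decomposition: `X ⫫ Y ∪ W | Z  ⇒  X ⫫ Y | Z`. -/
def IndepDecomp : Prop := ∀ X Y W Z : Set V, I X (Y ∪ W) Z → I X Y Z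

/-- Weak union: `X ⫫ Y ∪ W | Z  ⇒  X ⫫ Y | Z ∪ W`. -/
def IndepWeakUnion : Prop := ∀ X Y W Z : Set V, I X (Y ∪ W) Z → I X Y (Z ∪ W)

/-- Contraction: `X ⫫ Y | Z ∪ W` and `X ⫫ W | Z` imply `X ⫫ Y ∪ W | Z`. -/
def IndepContraction : Prop := ∀ X Y W Z : Set V, I X Y (Z ∪ W) → I X W Z → I X (Y ∪ W) Z

/-- Composition: `X ⫫ Y | Z` and `X ⫫ W | Z` imply `X ⫫ Y ∪ W | Z`. -/
def IndepComposition : Prop := ∀ X Y W Z : Set V, I X Y Z → I X W Z → I X (Y ∪ W) Z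

/-- A semi-graphoid satisfies symmetry, decomposition, weak union and contraction. -/
def SemiGraphoid : Prop := IndepSymm I ∧ IndepDecomp I ∧ IndepWeakUnion I ∧ IndepContraction I

/-- A compositional semi-graphoid additionally satisfies composition. -/
def CompositionalSemiGraphoid : Prop := SemiGraphoid I ∧ IndepComposition I

variable (G : MixedGraph V)

/-- The global Markov property via m-separation: whenever `X` and `Y` are m-separated
given `Z` in `G` (for pairwise disjoint `X, Y, Z` with `X, Y` nonempty), `⟨X, Y | Z⟩ ∈ ℐ`. -/
def GlobalMarkovM : Prop :=
  ∀ X Y Z : Set V, X.Nonempty → Y.Nonempty →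
    Disjoint X Y → Disjoint X Z → Disjoint Y Z → G.MSep X Y Z → I X Y Z

/-- The global Markov property via augmented-graph separation: whenever `Z` separates `X`
from `Y` in the augmented graph of the induced subgraph of `G` on `an(X ∪ Y ∪ Z)` (for
pairwise disjoint `X, Y, Z` with `X, Y` nonempty), `⟨X, Y | Z⟩ ∈ ℐ`. -/
def GlobalMarkovAug : Prop :=
  ∀ X Y Z : Set V, X.Nonempty → Y.Nonempty →
    Disjoint X Y → Disjoint X Z → Disjoint Y Z → G.AugSep X Y Z → I X Y Z

/-- The block-recursive Markov property of type IV. -/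
def TypeIVMarkov : Prop :=
  ∀ T : Set V, G.IsChainComp T →
    (I T (G.ndD T \ G.paD T) (G.paD T)) ∧
    (∀ A : Set V, A ⊆ T → I A (G.paD T \ G.paSet A) (G.paSet A)) ∧
    (∀ A : Set V, A ⊆ T → G.ConnectedIn A → I A (T \ G.Nb A) (G.paD T))

/-- The multivariate regression (MR) Markov property with respect to the order `r` on the
chain components: (MR1) for connected `A ⊆ T`, `A ⫫ pre(T) \ pa_G(A) | pa_G(A)`; (MR2)
distinct connected components `A₁, A₂` of `A ⊆ T` satisfy `A₁ ⫫ A₂ | pre(T)`. -/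
def MRMarkov (r : Set V → Set V → Prop) : Prop :=
  ∀ T : Set V, G.IsChainComp T → ∀ A : Set V, A ⊆ T →
    (G.ConnectedIn A → I A (G.pre r T \ G.paSet A) (G.paSet A)) ∧
    (∀ x ∈ A, ∀ y ∈ A, G.disIn A x ≠ G.disIn A y →
      I (G.disIn A x) (G.disIn A y) (G.pre r T))

/-- The ordered local Markov property with respect to a total vertex order `r` : for every
vertex `x` and every ancestrally closed `A` with `x ∈ A ⊆ pre_{G,≺}(x)`,
`{x} ⫫ A \ (mb(x,A) ∪ {x}) | mb(x,A)`. -/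
def OrderedLocalMarkov (r : V → V → Prop) : Prop :=
  ∀ (x : V) (A : Set V), G.ancSet A = A → x ∈ A → A ⊆ {v | r v x ∨ v = x} →
    I {x} (A \ (G.mb x A ∪ {x})) (G.mb x A)

/-- The alternative local Markov property: for every vertex `v`,
`{v} ⫫ nd(v) \ bd(v) | pa_G(v)`. -/
def AltLocalMarkov : Prop :=
  ∀ v : V, I {v} (G.nd v \ G.bd v) (G.pa v)

end IndepModel

section DagConstruction

namespace MVRDag

variable {V : Type u}

/-- The DAG on `V ⊕ (V × V)` obtained from `G` by keeping all directed edges and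
replacing each bidirected edge by a latent common cause. -/
def D (G : MixedGraph V) : MixedGraph (V ⊕ (V × V)) where
  dir a b := match a, b with
    | Sum.inl u, Sum.inl v => G.dir u v
    | Sum.inr p, Sum.inl w => G.bi p.1 p.2 ∧ (w = p.1 ∨ w = p.2)
    | _, _ => False
  bi _ _ := False

lemma D_bi (G : MixedGraph V) (a b : V ⊕ (V × V)) : ¬ (D G).bi a b := fun h => h

lemma dir_inl_inl {G : MixedGraph V} {u v : V} :
    (D G).dir (Sum.inl u) (Sum.inl v) ↔ G.dir u v := Iff.rfl

lemma not_dir_inr {G : MixedGraph V} {a : V ⊕ (V × V)} {p : V × V} :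
    ¬ (D G).dir a (Sum.inr p) := by cases a <;> exact fun h => h

lemma dir_inl {G : MixedGraph V} {u : V} {b : V ⊕ (V × V)}
    (h : (D G).dir (Sum.inl u) b) : ∃ v, b = Sum.inl v ∧ G.dir u v := by
  cases b with
  | inl v => exact ⟨v, rfl, h⟩
  | inr p => exact absurd h not_dir_inr

lemma rtg_inl {G : MixedGraph V} {u : V} {y : V ⊕ (V × V)}
    (h : Relation.ReflTransGen (D G).dir (Sum.inl u) y) :
    ∃ z, y = Sum.inl z ∧ Relation.ReflTransGen G.dir u z := by
  induction h with
  | refl => exact ⟨u, rfl, Relation.ReflTransGen.refl⟩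
  | tail _ hstep ih =>
    obtain ⟨z, rfl, hz⟩ := ih
    obtain ⟨w, rfl, hw⟩ := dir_inl hstep
    exact ⟨w, rfl, hz.tail hw⟩

lemma tg_inl {G : MixedGraph V} {u : V} {y : V ⊕ (V × V)}
    (h : Relation.TransGen (D G).dir (Sum.inl u) y) :
    ∃ z, y = Sum.inl z ∧ Relation.TransGen G.dir u z := by
  induction h with
  | single hstep =>
    obtain ⟨w, rfl, hw⟩ := dir_inl hstep
    exact ⟨w, rfl, Relation.TransGen.single hw⟩
  | tail _ hstep ih =>
    obtain ⟨z, rfl, hz⟩ := ih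
    obtain ⟨w, rfl, hw⟩ := dir_inl hstep
    exact ⟨w, rfl, hz.tail hw⟩

lemma rtg_lift {G : MixedGraph V} {u z : V} (h : Relation.ReflTransGen G.dir u z) :
    Relation.ReflTransGen (D G).dir (Sum.inl u) (Sum.inl z) := by
  induction h with
  | refl => exact Relation.ReflTransGen.refl
  | tail _ hs ih => exact ih.tail hs

lemma mem_ancSet_inl {G : MixedGraph V} {Z : Set V} {w : V} :
    Sum.inl w ∈ (D G).ancSet (Sum.inl '' Z) ↔ w ∈ G.ancSet Z := by
  constructor
  · rintro ⟨s, ⟨z, hz, rfl⟩, hanc⟩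
    obtain ⟨z', hz', hrtg⟩ := rtg_inl hanc
    cases hz'
    exact ⟨z, hz, hrtg⟩
  · rintro ⟨z, hz, hanc⟩
    exact ⟨Sum.inl z, ⟨z, hz, rfl⟩, rtg_lift hanc⟩

/-- From a directed closed walk, extract a partially directed cycle. -/
lemma hasPDCycle_of_transGen {G : MixedGraph V} (hM : G.IsMixed) {u : V}
    (h : Relation.TransGen G.dir u u) : G.HasPDCycle := by
  obtain ⟨_, hirr_bi, hirr, _, _⟩ := hM
  -- first: extract a walk
  have hwalk : ∀ {a b : V}, Relation.TransGen G.dir a b →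
      ∃ (n : ℕ) (f : ℕ → V), 1 ≤ n ∧ f 0 = a ∧ f n = b ∧
        ∀ i, i < n → G.dir (f i) (f (i + 1)) := by
    intro a b hab
    induction hab with
    | single hs =>
      rename_i c
      refine ⟨1, fun k => if k = 0 then a else c, le_refl 1, by simp, by simp, ?_⟩
      intro i hi
      interval_cases i
      simpa using hs
    | tail htg hstep ih =>
      rename_i bmid cfin
      obtain ⟨n, f, hn1, hf0, hfn, hf⟩ := ih
      refine ⟨n + 1, fun k => if k = n + 1 then cfin else f k, by omega, ?_, by simp, ?_⟩
      · simp only [if_neg (by omega : ¬ (0 = n + 1))]; exact hf0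
      · intro i hi
        rcases Nat.lt_or_ge i n with hin | hin
        · simp only [if_neg (by omega : ¬ (i = n + 1)), if_neg (by omega : ¬ (i + 1 = n + 1))]
          exact hf i hin
        · have hieq : i = n := by omega
          subst hieq
          simp only [if_neg (by omega : ¬ (i = i + 1)), if_pos rfl]
          rw [hfn]; exact hstep
  obtain ⟨n₀, f₀, hn₀, hf₀0, hf₀n, hf₀⟩ := hwalk h
  -- consider the minimal length of a closed directed walk at u
  have hex : ∃ n : ℕ, 1 ≤ n ∧ ∃ f : ℕ → V, f 0 = u ∧ f n = u ∧
      ∀ i, i < n → G.dir (f i) (f (i + 1)) := ⟨n₀, hn₀, f₀, hf₀0, hf₀n, hf₀⟩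
  classical
  obtain ⟨hn1, f, hf0, hfn, hf⟩ := Nat.find_spec hex
  set n := Nat.find hex with hn_def
  have hmin : ∀ m, m < n → ¬ (1 ≤ m ∧ ∃ g : ℕ → V, g 0 = u ∧ g m = u ∧
      ∀ i, i < m → G.dir (g i) (g (i + 1))) := fun m hm => Nat.find_min hex hm
  have hn2 : 2 ≤ n := by
    rcases Nat.lt_or_ge n 2 with h2 | h2
    · exfalso
      have hneq : n = 1 := by omega
      have h01 := hf 0 (by omega)
      rw [hf0] at h01
      have h1 : f (0 + 1) = u := by
        have : (0 : ℕ) + 1 = n := by omega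
        rw [this, hfn]
      rw [h1] at h01
      exact hirr u h01
    · exact h2
  -- distinctness by minimality
  have hdist : ∀ i j, i < n → j < n → f i = f j → i = j := by
    intro i j hi hj hij
    by_contra hne
    -- wlog i < j
    wlog hlt : i < j generalizing i j
    · exact this j i hj hi hij.symm (Ne.symm hne) (by omega)
    -- shortcut walk of length n - (j - i)
    set m := n - (j - i) with hm_def
    have hji : j - i ≥ 1 := by omega
    have hm1 : 1 ≤ m := by omega
    have hmn : m < n := by omega
    refine hmin m hmn ⟨hm1, fun k => if k ≤ i then f k else f (k + (j - i)), ?_, ?_, ?_⟩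
    · simp only [if_pos (Nat.zero_le i)]; exact hf0
    · have hmi : ¬ m ≤ i := by omega
      simp only [if_neg hmi]
      have : m + (j - i) = n := by omega
      rw [this, hfn]
    · intro k hk
      rcases Nat.lt_or_ge k i with hki | hki
      · simp only [if_pos (by omega : k ≤ i), if_pos (by omega : k + 1 ≤ i)]
        exact hf k (by omega)
      · rcases Nat.eq_or_lt_of_le hki with hke | hkgt
        · simp only [if_pos (by omega : k ≤ i), if_neg (by omega : ¬ (k + 1 ≤ i))]
          rw [← hke]
          have : i + 1 + (j - i) = j + 1 := by omega
          rw [this, hij]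
          exact hf j (by omega)
        · simp only [if_neg (by omega : ¬ (k ≤ i)), if_neg (by omega : ¬ (k + 1 ≤ i))]
          have : k + 1 + (j - i) = (k + (j - i)) + 1 := by omega
          rw [this]
          exact hf (k + (j - i)) (by omega)
  exact ⟨n, f, hn2, by rw [hfn, hf0], hdist,
    fun i hi => Or.inl (hf i hi), 0, by omega, hf 0 (by omega)⟩

lemma acyclic {G : MixedGraph V} (hG : G.IsMVR) :
    ∀ v, ¬ Relation.TransGen (D G).dir v v := by
  rintro (u | p) h
  · obtain ⟨z, hz, htg⟩ := tg_inl h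
    cases hz
    exact hG.2 (hasPDCycle_of_transGen hG.1 htg)
  · cases h with
    | single hs => exact not_dir_inr hs
    | tail _ hs => exact not_dir_inr hs

/-! ### Expansion machinery -/

/-- Position tracker for the expansion of a mixed path into a DAG path.
`Sum.inl i` = at original vertex `i`, `Sum.inr i` = at the latent vertex inserted
between `i` and `i+1` (when step `i` is bidirected, encoded by `B i`). -/
noncomputable def hfun (B : ℕ → Prop) : ℕ → ℕ ⊕ ℕ
  | 0 => Sum.inl 0
  | k + 1 =>
    match hfun B k with
    | Sum.inl i => if B i then Sum.inr i else Sum.inl (i + 1)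
    | Sum.inr i => Sum.inl (i + 1)

def rank : ℕ ⊕ ℕ → ℕ := Sum.elim (fun i => 2 * i) (fun i => 2 * i + 1)

lemma hfun_succ_of_inl {B : ℕ → Prop} {k i : ℕ} (h : hfun B k = Sum.inl i) :
    hfun B (k + 1) = if B i then Sum.inr i else Sum.inl (i + 1) := by
  simp [hfun, h]

lemma hfun_succ_of_inr {B : ℕ → Prop} {k i : ℕ} (h : hfun B k = Sum.inr i) :
    hfun B (k + 1) = Sum.inl (i + 1) := by
  simp [hfun, h]

lemma rank_hfun_strictMono (B : ℕ → Prop) : StrictMono (fun k => rank (hfun B k)) := by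
  apply strictMono_nat_of_lt_succ
  intro k
  show rank (hfun B k) < rank (hfun B (k + 1))
  cases hk : hfun B k with
  | inl i =>
    rw [hfun_succ_of_inl hk]
    by_cases hb : B i
    · rw [if_pos hb]
      simp only [rank, Sum.elim_inl, Sum.elim_inr]
      omega
    · rw [if_neg hb]
      simp only [rank, Sum.elim_inl]
      omega
  | inr i =>
    rw [hfun_succ_of_inr hk]
    simp only [rank, Sum.elim_inl, Sum.elim_inr]
    omega

lemma exists_hfun_inl (B : ℕ → Prop) (i : ℕ) : ∃ k, hfun B k = Sum.inl i := by
  induction i with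
  | zero => exact ⟨0, rfl⟩
  | succ i ih =>
    obtain ⟨k, hk⟩ := ih
    by_cases hb : B i
    · refine ⟨k + 2, ?_⟩
      have h1 : hfun B (k + 1) = Sum.inr i := by rw [hfun_succ_of_inl hk, if_pos hb]
      exact hfun_succ_of_inr h1
    · exact ⟨k + 1, by rw [hfun_succ_of_inl hk, if_neg hb]⟩

lemma hfun_inr_B {B : ℕ → Prop} {k i : ℕ} (h : hfun B k = Sum.inr i) : B i := by
  induction k with
  | zero => simp [hfun] at h
  | succ k ih =>
    cases hk : hfun B k with
    | inl j =>
      rw [hfun_succ_of_inl hk] at h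
      by_cases hb : B j
      · rw [if_pos hb] at h
        cases h
        exact hb
      · rw [if_neg hb] at h; cases h
    | inr j => rw [hfun_succ_of_inr hk] at h; cases h

lemma hfun_pred_of_inl {B : ℕ → Prop} {k i : ℕ} (h : hfun B (k + 1) = Sum.inl i) :
    0 < i ∧ ((hfun B k = Sum.inl (i - 1) ∧ ¬ B (i - 1)) ∨ hfun B k = Sum.inr (i - 1)) := by
  cases hk : hfun B k with
  | inl j =>
    rw [hfun_succ_of_inl hk] at h
    by_cases hb : B j
    · rw [if_pos hb] at h; cases h
    · rw [if_neg hb] at h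
      cases h
      refine ⟨by omega, Or.inl ⟨?_, ?_⟩⟩
      · simpa using hk
      · simpa using hb
  | inr j =>
    rw [hfun_succ_of_inr hk] at h
    cases h
    exact ⟨by omega, Or.inr (by simpa using hk)⟩

/-- Lifting an m-connecting path of `G` to an m-connecting path of `D G`. -/
lemma mconn_lift {G : MixedGraph V} (hM : G.IsMixed) {Z : Set V} {α β : V}
    (h : G.MConnecting Z α β) :
    (D G).MConnecting (Sum.inl '' Z) (Sum.inl α) (Sum.inl β) := by
  obtain ⟨hbisymm, hbiirr, hirr, hdnb, hdnd⟩ := hM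
  obtain ⟨n, f, ⟨hwalk, hinj⟩, h0, hn, hcond⟩ := h
  classical
  set B : ℕ → Prop := fun i => G.bi (f i) (f (i + 1)) with hB
  obtain ⟨N, hN⟩ := exists_hfun_inl B n
  set g : ℕ → V ⊕ (V × V) := fun k =>
    match hfun B k with
    | Sum.inl i => Sum.inl (f i)
    | Sum.inr i => Sum.inr (f i, f (i + 1)) with hg
  have hmono := rank_hfun_strictMono B
  have hrankN : rank (hfun B N) = 2 * n := by rw [hN]; rfl
  have hidx_lt : ∀ k, k < N → (∀ i, hfun B k = Sum.inl i → i < n) ∧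
      (∀ i, hfun B k = Sum.inr i → i < n) := by
    intro k hk
    have hr : rank (hfun B k) < 2 * n := by rw [← hrankN]; exact hmono hk
    constructor
    · intro i hi; rw [hi] at hr; simp [rank] at hr; omega
    · intro i hi; rw [hi] at hr; simp [rank] at hr; omega
  have hidx_le : ∀ k, k ≤ N → (∀ i, hfun B k = Sum.inl i → i ≤ n) ∧
      (∀ i, hfun B k = Sum.inr i → i < n) := by
    intro k hk
    have hr : rank (hfun B k) ≤ 2 * n := by rw [← hrankN]; exact hmono.monotone hk
    constructor
    · intro i hi; rw [hi] at hr; simp [rank] at hr; omega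
    · intro i hi; rw [hi] at hr; simp [rank] at hr; omega
  have hgval_inl : ∀ k i, hfun B k = Sum.inl i → g k = Sum.inl (f i) := by
    intro k i hk; simp only [hg, hk]
  have hgval_inr : ∀ k i, hfun B k = Sum.inr i → g k = Sum.inr (f i, f (i + 1)) := by
    intro k i hk; simp only [hg, hk]
  refine ⟨N, g, ⟨?_, ?_⟩, ?_, ?_, ?_⟩
  · -- walk
    intro k hk
    cases hk' : hfun B k with
    | inl i =>
      have hin : i < n := (hidx_lt k hk).1 i hk'
      rw [hgval_inl k i hk']
      by_cases hb : B i
      · have h1 : hfun B (k + 1) = Sum.inr i := by rw [hfun_succ_of_inl hk', if_pos hb]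
        rw [hgval_inr (k + 1) i h1]
        exact Or.inr (Or.inl ⟨hb, Or.inl rfl⟩)
      · have h1 : hfun B (k + 1) = Sum.inl (i + 1) := by rw [hfun_succ_of_inl hk', if_neg hb]
        rw [hgval_inl (k + 1) (i + 1) h1]
        rcases hwalk i hin with hd | hd | hd
        · exact Or.inl hd
        · exact Or.inr (Or.inl hd)
        · exact absurd hd hb
    | inr i =>
      have h1 : hfun B (k + 1) = Sum.inl (i + 1) := hfun_succ_of_inr hk'
      rw [hgval_inr k i hk', hgval_inl (k + 1) (i + 1) h1]
      exact Or.inl ⟨hfun_inr_B hk', Or.inr rfl⟩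
  · -- injectivity
    intro k k' hk hk' hgg
    cases hk1 : hfun B k with
    | inl i =>
      cases hk2 : hfun B k' with
      | inl i' =>
        rw [hgval_inl k i hk1, hgval_inl k' i' hk2] at hgg
        have : i = i' := hinj i i' ((hidx_le k hk).1 i hk1) ((hidx_le k' hk').1 i' hk2)
          (Sum.inl.inj hgg)
        subst this
        exact hmono.injective (by rw [hk1, hk2])
      | inr i' =>
        rw [hgval_inl k i hk1, hgval_inr k' i' hk2] at hgg
        exact absurd hgg (by simp)
    | inr i =>
      cases hk2 : hfun B k' with
      | inl i' =>
        rw [hgval_inr k i hk1, hgval_inl k' i' hk2] at hgg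
        exact absurd hgg (by simp)
      | inr i' =>
        rw [hgval_inr k i hk1, hgval_inr k' i' hk2] at hgg
        have hii : f i = f i' := by
          have := Sum.inr.inj hgg
          exact congrArg Prod.fst this
        have : i = i' := hinj i i' (le_of_lt ((hidx_le k hk).2 i hk1))
          (le_of_lt ((hidx_le k' hk').2 i' hk2)) hii
        subst this
        exact hmono.injective (by rw [hk1, hk2])
  · rw [hgval_inl 0 0 rfl, h0]
  · rw [hgval_inl N n hN, hn]
  · -- internal conditions
    intro k hk0 hkN
    cases hk' : hfun B k with
    | inr i =>
      have hnc : ¬ (D G).IsColliderAt g k := by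
        rintro ⟨(hd | hd), -⟩
        · rw [hgval_inr k i hk'] at hd
          exact not_dir_inr hd
        · exact hd
      refine ⟨fun hc => absurd hc hnc, fun _ => ?_⟩
      rw [hgval_inr k i hk']
      rintro ⟨z, -, hz⟩
      exact absurd hz (by simp)
    | inl i =>
      have hk1 : k - 1 + 1 = k := by omega
      have hpred : 0 < i ∧ ((hfun B (k - 1) = Sum.inl (i - 1) ∧ ¬ B (i - 1)) ∨
          hfun B (k - 1) = Sum.inr (i - 1)) := by
        apply hfun_pred_of_inl
        rw [hk1]; exact hk'
      obtain ⟨hi0, hpred⟩ := hpred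
      have hin : i < n := (hidx_lt k hkN).1 i hk'
      have hi1 : i - 1 + 1 = i := by omega
      have hgk : g k = Sum.inl (f i) := hgval_inl k i hk'
      -- collider equivalence
      have hcoll : (D G).IsColliderAt g k ↔ G.IsColliderAt f i := by
        have hconj1 : ((D G).dir (g (k - 1)) (g k) ∨ (D G).bi (g (k - 1)) (g k)) ↔
            (G.dir (f (i - 1)) (f i) ∨ G.bi (f (i - 1)) (f i)) := by
          rcases hpred with ⟨hp, hnb⟩ | hp
          · rw [hgval_inl (k - 1) (i - 1) hp, hgk]
            have hnb' : ¬ G.bi (f (i - 1)) (f i) := by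
              intro hbb
              apply hnb
              show G.bi (f (i - 1)) (f (i - 1 + 1))
              rw [hi1]
              exact hbb
            constructor
            · rintro (hd | hd)
              · exact Or.inl hd
              · exact absurd hd (D_bi G _ _)
            · rintro (hd | hd)
              · exact Or.inl hd
              · exact absurd hd hnb'
          · have hbb : G.bi (f (i - 1)) (f i) := by
              have h' : G.bi (f (i - 1)) (f (i - 1 + 1)) := hfun_inr_B hp
              rwa [hi1] at h'
            rw [hgval_inr (k - 1) (i - 1) hp, hgk]
            constructor
            · intro _; exact Or.inr hbb
            · intro _
              refine Or.inl ⟨?_, Or.inr ?_⟩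
              · show G.bi (f (i - 1)) (f (i - 1 + 1))
                rw [hi1]
                exact hbb
              · show f i = f (i - 1 + 1)
                rw [hi1]
        have hconj2 : ((D G).dir (g (k + 1)) (g k) ∨ (D G).bi (g k) (g (k + 1))) ↔
            (G.dir (f (i + 1)) (f i) ∨ G.bi (f i) (f (i + 1))) := by
          by_cases hb : B i
          · have h1 : hfun B (k + 1) = Sum.inr i := by rw [hfun_succ_of_inl hk', if_pos hb]
            rw [hgval_inr (k + 1) i h1, hgk]
            constructor
            · intro _; exact Or.inr hb
            · intro _; exact Or.inl ⟨hb, Or.inl rfl⟩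
          · have h1 : hfun B (k + 1) = Sum.inl (i + 1) := by
              rw [hfun_succ_of_inl hk', if_neg hb]
            rw [hgval_inl (k + 1) (i + 1) h1, hgk]
            constructor
            · rintro (hd | hd)
              · exact Or.inl hd
              · exact absurd hd (D_bi G _ _)
            · rintro (hd | hd)
              · exact Or.inl hd
              · exact absurd hd hb
        constructor
        · rintro ⟨h1, h2⟩; exact ⟨hconj1.mp h1, hconj2.mp h2⟩
        · rintro ⟨h1, h2⟩; exact ⟨hconj1.mpr h1, hconj2.mpr h2⟩
      have hGc := hcond i hi0 hin
      constructor
      · intro hc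
        rw [hgk]
        exact mem_ancSet_inl.mpr (hGc.1 (hcoll.mp hc))
      · intro hnc
        rw [hgk]
        have := hGc.2 (fun hc => hnc (hcoll.mpr hc))
        rintro ⟨z, hz, hzz⟩
        cases Sum.inl.inj hzz.symm
        exact this hz

/-! ### Contraction machinery -/

/-- Position of the `j`-th non-latent vertex along a path of `D G`. -/
noncomputable def qfun (g : ℕ → V ⊕ (V × V)) : ℕ → ℕ
  | 0 => 0
  | j + 1 => if ∃ p, g (qfun g j + 1) = Sum.inr p then qfun g j + 2 else qfun g j + 1

lemma qfun_succ_of_inr {g : ℕ → V ⊕ (V × V)} {j : ℕ} {p : V × V}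
    (h : g (qfun g j + 1) = Sum.inr p) : qfun g (j + 1) = qfun g j + 2 := by
  rw [qfun, if_pos ⟨p, h⟩]

lemma qfun_succ_of_not_inr {g : ℕ → V ⊕ (V × V)} {j : ℕ}
    (h : ¬ ∃ p, g (qfun g j + 1) = Sum.inr p) : qfun g (j + 1) = qfun g j + 1 := by
  rw [qfun, if_neg h]

lemma qfun_succ (g : ℕ → V ⊕ (V × V)) (j : ℕ) :
    qfun g (j + 1) = qfun g j + 2 ∨ qfun g (j + 1) = qfun g j + 1 := by
  by_cases h : ∃ p, g (qfun g j + 1) = Sum.inr p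
  · obtain ⟨p, hp⟩ := h
    exact Or.inl (qfun_succ_of_inr hp)
  · exact Or.inr (qfun_succ_of_not_inr h)

lemma qfun_strictMono (g : ℕ → V ⊕ (V × V)) : StrictMono (qfun g) := by
  apply strictMono_nat_of_lt_succ
  intro j
  rcases qfun_succ g j with h | h <;> omega

/-- Contracting an m-connecting path of `D G` to an m-connecting path of `G`. -/
lemma mconn_lower {G : MixedGraph V} (hM : G.IsMixed) {Z : Set V} {α β : V}
    (h : (D G).MConnecting (Sum.inl '' Z) (Sum.inl α) (Sum.inl β)) :
    G.MConnecting Z α β := by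
  obtain ⟨hbisymm, hbiirr, hirr, hdnb, hdnd⟩ := hM
  obtain ⟨N, g, ⟨hwalk, hinj⟩, h0, hNg, hcond⟩ := h
  classical
  set q : ℕ → ℕ := qfun g with hq
  have hqmono : StrictMono q := qfun_strictMono g
  have hsucc2 : ∀ (j : ℕ) (p : V × V), g (q j + 1) = Sum.inr p → q (j + 1) = q j + 2 :=
    fun _ _ h => qfun_succ_of_inr h
  have hsucc1 : ∀ j : ℕ, (¬ ∃ p, g (q j + 1) = Sum.inr p) → q (j + 1) = q j + 1 :=
    fun _ h => qfun_succ_of_not_inr h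
  have hq0 : q 0 = 0 := rfl
  -- the tracked positions carry non-latent vertices
  have hkey : ∀ j, q j ≤ N → ∃ v, g (q j) = Sum.inl v := by
    intro j
    induction j with
    | zero => intro _; rw [hq0, h0]; exact ⟨α, rfl⟩
    | succ j ih =>
      intro hle
      have hqj : q j < q (j + 1) := hqmono (by omega)
      obtain ⟨v, hv⟩ := ih (by omega)
      by_cases hp : ∃ p, g (q j + 1) = Sum.inr p
      · obtain ⟨p, hp⟩ := hp
        have h2 : q (j + 1) = q j + 2 := hsucc2 j p hp
        have hb2 : q j + 2 ≤ N := by omega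
        have hstep := hwalk (q j + 1) (by omega)
        rw [hp] at hstep
        rw [h2]
        cases hgg : g (q j + 2) with
        | inl w => exact ⟨w, rfl⟩
        | inr p' =>
          rw [hgg] at hstep
          rcases hstep with hd | hd | hd
          · exact absurd hd not_dir_inr
          · exact absurd hd not_dir_inr
          · exact absurd hd (D_bi G _ _)
      · have h1 : q (j + 1) = q j + 1 := hsucc1 j hp
        rw [h1]
        cases hgg : g (q j + 1) with
        | inl w => exact ⟨w, rfl⟩
        | inr p' => exact absurd ⟨p', hgg⟩ hp
  have hex : ∃ j, N ≤ q j := ⟨N, hqmono.le_apply⟩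
  set n := Nat.find hex with hn_def
  have hn_spec : N ≤ q n := Nat.find_spec hex
  have hqn : q n = N := by
    rcases Nat.eq_zero_or_pos n with hz | hpos
    · rw [hz, hq0] at hn_spec
      rw [hz, hq0]
      omega
    · obtain ⟨m, hnn⟩ : ∃ m, n = m + 1 := ⟨n - 1, by omega⟩
      have hm : ¬ N ≤ q m := Nat.find_min hex (by omega)
      have hs : N ≤ q (m + 1) := by rw [← hnn]; exact hn_spec
      rw [hnn]
      by_cases hp : ∃ p, g (q m + 1) = Sum.inr p
      · obtain ⟨p, hp⟩ := hp
        have h2 := hsucc2 m p hp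
        have hne : q m + 1 ≠ N := by
          intro heq
          rw [heq, hNg] at hp
          exact absurd hp (by simp)
        omega
      · have h1 := hsucc1 m hp
        omega
  have hqle : ∀ j, j ≤ n → q j ≤ N := by
    intro j hj
    calc q j ≤ q n := hqmono.monotone hj
    _ = N := hqn
  set f : ℕ → V := fun j =>
    match g (q j) with
    | Sum.inl v => v
    | Sum.inr _ => α with hf
  have hgq : ∀ j, j ≤ n → g (q j) = Sum.inl (f j) := by
    intro j hj
    obtain ⟨v, hv⟩ := hkey j (hqle j hj)
    simp only [hf, hv]
  -- step structure
  have hstep : ∀ j, j < n →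
      (q (j + 1) = q j + 1 ∧ (G.dir (f j) (f (j + 1)) ∨ G.dir (f (j + 1)) (f j))) ∨
      (q (j + 1) = q j + 2 ∧ G.bi (f j) (f (j + 1)) ∧ ∃ p, g (q j + 1) = Sum.inr p ∧
        (D G).dir (Sum.inr p) (Sum.inl (f j)) ∧
        (D G).dir (Sum.inr p) (Sum.inl (f (j + 1)))) := by
    intro j hj
    have hj1 : j + 1 ≤ n := by omega
    have hqj1 : q (j + 1) ≤ N := hqle (j + 1) hj1
    have hqjlt : q j < q (j + 1) := hqmono (by omega)
    have hfj := hgq j (by omega)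
    have hfj1 := hgq (j + 1) hj1
    by_cases hp : ∃ p, g (q j + 1) = Sum.inr p
    · -- two-step case
      right
      obtain ⟨p, hp⟩ := hp
      have h2 : q (j + 1) = q j + 2 := hsucc2 j p hp
      have hq2 : q j + 2 ≤ N := by omega
      have hs1 := hwalk (q j) (by omega)
      have hs2 := hwalk (q j + 1) (by omega)
      rw [hfj, hp] at hs1
      have hd1 : (D G).dir (Sum.inr p) (Sum.inl (f j)) := by
        rcases hs1 with hd | hd | hd
        · exact absurd hd not_dir_inr
        · exact hd
        · exact absurd hd (D_bi G _ _)
      have hq12 : q j + 2 = q (j + 1) := by omega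
      rw [hp, hq12, hfj1] at hs2
      have hd2 : (D G).dir (Sum.inr p) (Sum.inl (f (j + 1))) := by
        rcases hs2 with hd | hd | hd
        · exact hd
        · exact absurd hd not_dir_inr
        · exact absurd hd (D_bi G _ _)
      have hne : f j ≠ f (j + 1) := by
        intro heq
        have : g (q j) = g (q (j + 1)) := by rw [hfj, hfj1, heq]
        have := hinj (q j) (q (j + 1)) (by omega) hqj1 this
        omega
      have hbi : G.bi (f j) (f (j + 1)) := by
        obtain ⟨hbp, hj_or⟩ := hd1
        obtain ⟨-, hj1_or⟩ := hd2
        rcases hj_or with hja | hja <;> rcases hj1_or with hjb | hjb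
        · exact absurd (hja.trans hjb.symm) hne
        · rw [hja, hjb]; exact hbp
        · rw [hja, hjb]; exact hbisymm _ _ hbp
        · exact absurd (hja.trans hjb.symm) hne
      exact ⟨h2, hbi, p, hp, hd1, hd2⟩
    · -- one-step case
      left
      have h1 : q (j + 1) = q j + 1 := hsucc1 j hp
      have hs1 := hwalk (q j) (by omega)
      have hq11 : q j + 1 = q (j + 1) := by omega
      rw [hfj, hq11, hfj1] at hs1
      refine ⟨h1, ?_⟩
      rcases hs1 with hd | hd | hd
      · exact Or.inl hd
      · exact Or.inr hd
      · exact absurd hd (D_bi G _ _)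
  refine ⟨n, f, ⟨?_, ?_⟩, ?_, ?_, ?_⟩
  · -- walk
    intro j hj
    rcases hstep j hj with ⟨-, hd | hd⟩ | ⟨-, hbi, -⟩
    · exact Or.inl hd
    · exact Or.inr (Or.inl hd)
    · exact Or.inr (Or.inr hbi)
  · -- injectivity
    intro j j' hj hj' hff
    have : g (q j) = g (q j') := by rw [hgq j hj, hgq j' hj', hff]
    have := hinj (q j) (q j') (hqle j hj) (hqle j' hj') this
    exact hqmono.injective this
  · -- f 0 = α
    have := hgq 0 (by omega)
    have h00 : q 0 = 0 := rfl
    rw [h00, h0] at this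
    exact (Sum.inl.inj this).symm
  · -- f n = β
    have := hgq n (le_refl n)
    rw [hqn, hNg] at this
    exact (Sum.inl.inj this).symm
  · -- internal conditions
    intro j hj0 hjn
    have hqj0 : 0 < q j := by
      have : q 0 < q j := hqmono hj0
      simpa [hq0] using this
    have hqjN : q j < N := by
      have : q j < q n := hqmono hjn
      omega
    have hDc := hcond (q j) hqj0 hqjN
    have hgj : g (q j) = Sum.inl (f j) := hgq j (by omega)
    -- exclusivity helper
    have hexcl : ∀ a b : V, (G.dir a b ∨ G.dir b a) → ¬ G.bi a b := by
      rintro a b (hd | hd) hb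
      · exact hdnb a b hd hb
      · exact hdnb b a hd (hbisymm a b hb)
    have hcoll : (D G).IsColliderAt g (q j) ↔ G.IsColliderAt f j := by
      have hj1 : j - 1 + 1 = j := by omega
      have hstepL := hstep (j - 1) (by omega)
      rw [hj1] at hstepL
      have hconj1 : ((D G).dir (g (q j - 1)) (g (q j)) ∨ (D G).bi (g (q j - 1)) (g (q j))) ↔
          (G.dir (f (j - 1)) (f j) ∨ G.bi (f (j - 1)) (f j)) := by
        rcases hstepL with ⟨hq1, hdor⟩ | ⟨hq2, hbi, p, hp, hd1, hd2⟩
        · have hqm : q j - 1 = q (j - 1) := by omega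
          rw [hqm, hgq (j - 1) (by omega), hgj]
          have hnb : ¬ G.bi (f (j - 1)) (f j) := hexcl _ _ hdor
          constructor
          · rintro (hd | hd)
            · exact Or.inl hd
            · exact absurd hd (D_bi G _ _)
          · rintro (hd | hd)
            · exact Or.inl hd
            · exact absurd hd hnb
        · have hqm : q j - 1 = q (j - 1) + 1 := by omega
          rw [hqm, hp, hgj]
          constructor
          · intro _; exact Or.inr hbi
          · intro _; exact Or.inl hd2
      have hstepR := hstep j (by omega)
      have hconj2 : ((D G).dir (g (q j + 1)) (g (q j)) ∨ (D G).bi (g (q j)) (g (q j + 1))) ↔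
          (G.dir (f (j + 1)) (f j) ∨ G.bi (f j) (f (j + 1))) := by
        rcases hstepR with ⟨hq1, hdor⟩ | ⟨hq2, hbi, p, hp, hd1, hd2⟩
        · have hqm : q j + 1 = q (j + 1) := by omega
          rw [hqm, hgq (j + 1) (by omega), hgj]
          have hnb : ¬ G.bi (f j) (f (j + 1)) := hexcl _ _ (by tauto)
          constructor
          · rintro (hd | hd)
            · exact Or.inl hd
            · exact absurd hd (D_bi G _ _)
          · rintro (hd | hd)
            · exact Or.inl hd
            · exact absurd hd hnb
        · rw [hp, hgj]
          constructor
          · intro _; exact Or.inr hbi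
          · intro _; exact Or.inl hd1
      constructor
      · rintro ⟨h1, h2⟩; exact ⟨hconj1.mp h1, hconj2.mp h2⟩
      · rintro ⟨h1, h2⟩; exact ⟨hconj1.mpr h1, hconj2.mpr h2⟩
    constructor
    · intro hc
      have := hDc.1 (hcoll.mpr hc)
      rw [hgj] at this
      exact mem_ancSet_inl.mp this
    · intro hnc hmem
      have := hDc.2 (fun hc => hnc (hcoll.mp hc))
      rw [hgj] at this
      exact this ⟨f j, hmem, rfl⟩

end MVRDag

end DagConstruction

/-- Every MVR chain graph has the same independence model as a DAG under
marginalization: there exist a finite type `L` of latent vertices and a DAG `D` on the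
vertex set `V ⊕ L` (no bidirected edges, no directed cycles) such that for all pairwise
disjoint `X, Y, Z ⊆ V` with `X, Y` nonempty, `X` and `Y` are m-separated given `Z` in `G`
iff they are d-separated (= m-separated, as `D` has only directed edges) given `Z` in `D`. -/
theorem mvr_is_dag_under_marginalization {V : Type u} [Fintype V]
    (G : MixedGraph V) (hG : G.IsMVR) :
    ∃ (L : Type u) (_ : Fintype L) (D : MixedGraph (V ⊕ L)),
      (∀ u v, ¬ D.bi u v) ∧
      (∀ v, ¬ D.dir v v) ∧
      (∀ v, ¬ Relation.TransGen D.dir v v) ∧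
      ∀ X Y Z : Set V, X.Nonempty → Y.Nonempty →
        Disjoint X Y → Disjoint X Z → Disjoint Y Z →
        (G.MSep X Y Z ↔ D.MSep (Sum.inl '' X) (Sum.inl '' Y) (Sum.inl '' Z)) := by
  refine ⟨V × V, inferInstance, MVRDag.D G, MVRDag.D_bi G, ?_, MVRDag.acyclic hG, ?_⟩
  · rintro (u | p) h
    · exact hG.1.2.2.1 u h
    · exact h
  · intro X Y Z _ _ _ _ _
    constructor
    · rintro h α' ⟨a, ha, rfl⟩ β' ⟨b, hb, rfl⟩ hconn
      exact h a ha b hb (MVRDag.mconn_lower hG.1 hconn)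
    · intro h a ha b hb hconn
      exact h (Sum.inl a) ⟨a, ha, rfl⟩ (Sum.inl b) ⟨b, hb, rfl⟩ (MVRDag.mconn_lift hG.1 hconn)
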